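/- arXiv:2204.11213 — 2 statements merged into one kernel-verified Lean document; each statement's English description precedes it below -/
import Mathlib

section
/- If A and B are nonempty words with A^{m1} = B^{m2} for some positive integers m1, m2, then there exists a word C and integers k, l such that A = C^k and B = C^l. -/
/-- `wpow A n` is the `n`-fold concatenation `A^n` of the word `A`. -/
def wpow {α : Type*} (A : List α) : ℕ → List α
  | 0 => []
  | n + 1 => A ++ wpow A n

lemma wpow_add {α : Type*} (A : List α) (m n : ℕ) :
    wpow A (m + n) = wpow A m ++ wpow A n := by
  induction m with
  | zero => simp [wpow]
  | succ m ih =>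
    rw [show m + 1 + n = (m + n) + 1 by omega]
    show A ++ wpow A (m + n) = A ++ wpow A m ++ wpow A n
    rw [ih, List.append_assoc]

lemma length_wpow {α : Type*} (A : List α) (n : ℕ) :
    (wpow A n).length = n * A.length := by
  induction n with
  | zero => simp [wpow]
  | succ n ih => simp [wpow, ih]; ring

lemma wpow_prefix {α : Type*} (A : List α) {m n : ℕ} (h : m ≤ n) :
    wpow A m <+: wpow A n := by
  rw [show n = m + (n - m) by omega, wpow_add]
  exact List.prefix_append _ _

lemma comm_lemma {α : Type*} : ∀ n (A B : List α), A.length + B.length ≤ n →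
    A ++ B = B ++ A → ∃ (C : List α) (k l : ℕ), A = wpow C k ∧ B = wpow C l := by
  intro n
  induction n with
  | zero =>
    intro A B hlen _
    have : A = [] ∧ B = [] := by
      constructor <;> (apply List.eq_nil_of_length_eq_zero; omega)
    exact ⟨[], 0, 0, by simp [this.1, wpow], by simp [this.2, wpow]⟩
  | succ n ih =>
    intro A B hlen hcomm
    rcases eq_or_ne A [] with rfl | hA
    · exact ⟨B, 0, 1, by simp [wpow], by simp [wpow]⟩
    rcases eq_or_ne B [] with rfl | hB
    · exact ⟨A, 1, 0, by simp [wpow], by simp [wpow]⟩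
    rcases le_total A.length B.length with hle | hle
    · -- A is a prefix of B
      have hAB : A <+: B := by
        have h1 : A <+: B ++ A := hcomm ▸ List.prefix_append A B
        have h2 : B <+: B ++ A := List.prefix_append B A
        exact List.prefix_of_prefix_length_le h1 h2 hle
      obtain ⟨B', rfl⟩ := hAB
      have hcomm' : A ++ B' = B' ++ A := by
        have := hcomm
        rw [List.append_assoc] at this
        simpa using (List.append_cancel_left this : A ++ B' = B' ++ A)
      have hlen' : A.length + B'.length ≤ n := by
        have : 0 < A.length := List.length_pos_iff.mpr hA
        simp at hlen; omega
      obtain ⟨C, k, l, hA', hB'⟩ := ih A B' hlen' hcomm'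
      exact ⟨C, k, k + l, hA', by rw [wpow_add, hA', hB']⟩
    · -- symmetric
      have hAB : B <+: A := by
        have h1 : B <+: B ++ A := List.prefix_append B A
        have h2 : A <+: B ++ A := hcomm ▸ List.prefix_append A B
        exact List.prefix_of_prefix_length_le h1 h2 hle
      obtain ⟨A', rfl⟩ := hAB
      have hcomm' : B ++ A' = A' ++ B := by
        have := hcomm.symm
        rw [List.append_assoc] at this
        simpa using (List.append_cancel_left this : B ++ A' = A' ++ B)
      have hlen' : B.length + A'.length ≤ n := by
        have : 0 < B.length := List.length_pos_iff.mpr hB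
        simp at hlen; omega
      obtain ⟨C, k, l, hB', hA'⟩ := ih B A' hlen' hcomm'
      exact ⟨C, k + l, k, by rw [wpow_add, hB', hA'], hB'⟩

lemma pref_left {α : Type*} {B C : List α} (A : List α) (h : B <+: C) :
    A ++ B <+: A ++ C := by
  obtain ⟨t, ht⟩ := h
  exact ⟨t, by rw [List.append_assoc, ht]⟩

theorem stmt2 {α : Type*} (A B : List α) (hA : A ≠ []) (hB : B ≠ []) (m1 m2 : ℕ)
    (hm1 : 0 < m1) (hm2 : 0 < m2) (h : wpow A m1 = wpow B m2) :
    ∃ (C : List α) (k l : ℕ), A = wpow C k ∧ B = wpow C l := by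
  have hW : wpow A (2 * m1) = wpow B (2 * m2) := by
    rw [two_mul, two_mul, wpow_add, wpow_add, h]
  have hApre : A <+: wpow A m1 := by
    rw [show m1 = 1 + (m1 - 1) by omega, wpow_add]
    simpa [wpow] using List.prefix_append _ _
  have hBpre : B <+: wpow B m2 := by
    rw [show m2 = 1 + (m2 - 1) by omega, wpow_add]
    simpa [wpow] using List.prefix_append _ _
  have hBA : B <+: wpow A m1 := h ▸ hBpre
  have hAB2 : A <+: wpow B m2 := h.symm ▸ hApre
  have h1 : A ++ B <+: wpow A (2 * m1) := by
    rw [show 2 * m1 = (2 * m1 - 1) + 1 by omega]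
    show A ++ B <+: A ++ wpow A (2 * m1 - 1)
    exact pref_left A (hBA.trans (wpow_prefix A (by omega)))
  have h2 : B ++ A <+: wpow B (2 * m2) := by
    rw [show 2 * m2 = (2 * m2 - 1) + 1 by omega]
    show B ++ A <+: B ++ wpow B (2 * m2 - 1)
    exact pref_left B (hAB2.trans (wpow_prefix B (by omega)))
  rw [hW] at h1
  have hcomm : A ++ B = B ++ A := by
    have := List.prefix_of_prefix_length_le h1 h2 (by simp; omega)
    exact this.eq_of_length (by simp; omega)
  exact comm_lemma (A.length + B.length) A B le_rfl hcomm
end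

section
/- Let A be a nonempty word, and let j be the largest integer with j < |A| such that the prefix of A of length j equals the suffix of A of length j (j = 0 allowed). Let k = |A| - j. Then: if k divides |A|, the root of A has length k; otherwise, A is primitive (its root has length |A|). -/
/-- A word is primitive if it is nonempty and is not a proper power `B^k`, `k ≥ 2`. -/
def Primitive {α : Type*} (A : List α) : Prop :=
  A ≠ [] ∧ ∀ (B : List α) (k : ℕ), 2 ≤ k → A ≠ wpow B k

lemma wpow_length {α : Type*} (B : List α) (n : ℕ) : (wpow B n).length = n * B.length := by
  induction n with
  | zero => simp [wpow]
  | succ m ih => simp [wpow, ih]; ring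

lemma wpow_succ' {α : Type*} (B : List α) (n : ℕ) : wpow B (n + 1) = wpow B n ++ B := by
  induction n with
  | zero => simp [wpow]
  | succ m ih =>
    show B ++ wpow B (m + 1) = (B ++ wpow B m) ++ B
    rw [ih, List.append_assoc]

/-- pointwise period -/
def HasPer {α : Type*} (A : List α) (p : ℕ) : Prop :=
  ∀ i, i + p < A.length → A[i]? = A[i + p]?

lemma border_per {α : Type*} (A : List α) (p : ℕ) (hp : p ≤ A.length)
    (h : A.take (A.length - p) = A.drop p) : HasPer A p := by
  intro i hi
  have h1 : (A.take (A.length - p))[i]? = (A.drop p)[i]? := by rw [h]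
  rw [List.getElem?_take, List.getElem?_drop, if_pos (by omega)] at h1
  rw [h1]; congr 1; omega

lemma per_pow {α : Type*} (p : ℕ) (hp : 1 ≤ p) :
    ∀ (m : ℕ) (A : List α), A.length = m * p → HasPer A p → A = wpow (A.take p) m := by
  intro m
  induction m with
  | zero =>
    intro A hl _
    simp only [Nat.zero_mul] at hl
    simp [List.eq_nil_of_length_eq_zero hl, wpow]
  | succ m ih =>
    intro A hl hper
    have hN : A.length = m * p + p := by rw [hl]; ring
    rcases Nat.eq_zero_or_pos m with rfl | hm
    · have h0 : A.take p = A := List.take_of_length_le (by omega)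
      show A = A.take p ++ wpow (A.take p) 0
      simp [wpow, h0]
    · have hdl : (A.drop p).length = m * p := by
        rw [List.length_drop]; omega
      have hper' : HasPer (A.drop p) p := by
        intro i hi
        rw [hdl] at hi
        rw [List.getElem?_drop, List.getElem?_drop]
        have h1 := hper (p + i) (by omega)
        rw [h1]; congr 1; omega
      have ihd := ih (A.drop p) hdl hper'
      have htp : (A.drop p).take p = A.take p := by
        apply List.ext_getElem?
        intro i
        rw [List.getElem?_take, List.getElem?_take]
        by_cases hi : i < p
        · rw [if_pos hi, if_pos hi, List.getElem?_drop]
          have h2 := hper i (by nlinarith)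
          rw [show p + i = i + p from by omega]
          exact h2.symm
        · rw [if_neg hi, if_neg hi]
      rw [htp] at ihd
      show A = A.take p ++ wpow (A.take p) m
      conv_lhs => rw [← List.take_append_drop p A]
      rw [ihd]

lemma fine_wilf {α : Type*} (f : ℕ → Option α) (N : ℕ) :
    ∀ s p q, p + q = s → p + q ≤ N →
      (∀ i, i + p < N → f i = f (i + p)) →
      (∀ i, i + q < N → f i = f (i + q)) →
      ∀ i, i + Nat.gcd p q < N → f i = f (i + Nat.gcd p q) := by
  have step : ∀ p q, p ≤ q → p + q ≤ N →
      (∀ i, i + p < N → f i = f (i + p)) →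
      (∀ i, i + q < N → f i = f (i + q)) →
      ∀ i, i + (q - p) < N → f i = f (i + (q - p)) := by
    intro p q hpq hN hp hq i hi
    by_cases hc : i + q < N
    · have h1 := hq i hc
      have h2 := hp (i + (q - p)) (by omega)
      rw [h1, h2]; congr 1; omega
    · have hip : p ≤ i := by omega
      have h1 := hp (i - p) (by omega)
      have h2 := hq (i - p) (by omega)
      have e1 : i - p + p = i := by omega
      have e2 : i - p + q = i + (q - p) := by omega
      rw [e1] at h1
      rw [e2] at h2
      rw [← h1, h2]
  intro s
  induction s using Nat.strong_induction_on with
  | _ s IH =>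
    intro p q hs hN hp hq
    rcases Nat.eq_zero_or_pos p with hp0 | hp0
    · subst hp0; simpa using hq
    rcases Nat.eq_zero_or_pos q with hq0 | hq0
    · subst hq0; simpa using hp
    rcases le_or_gt p q with hpq | hpq
    · have hr := step p q hpq hN hp hq
      have hg : Nat.gcd p (q - p) = Nat.gcd p q := by
        have h := Nat.gcd_add_self_right p (q - p)
        rw [show q - p + p = q by omega] at h
        exact h.symm
      have h := IH (p + (q - p)) (by omega) p (q - p) rfl (by omega) hp hr
      rwa [hg] at h
    · have hr := step q p (by omega) (by omega) hq hp
      have hg : Nat.gcd q (p - q) = Nat.gcd p q := by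
        have h := Nat.gcd_add_self_right q (p - q)
        rw [show p - q + q = p by omega] at h
        rw [Nat.gcd_comm q p] at h
        exact h.symm
      have h := IH (q + (p - q)) (by omega) q (p - q) rfl (by omega) hq hr
      rwa [hg] at h

/-- A power `B^n`, `n ≥ 1`, has a border of length `N - |B|`. -/
lemma pow_border {α : Type*} (B : List α) (n : ℕ) (hn : 1 ≤ n) :
    (wpow B n).take ((wpow B n).length - B.length) = (wpow B n).drop B.length := by
  obtain ⟨m, rfl⟩ : ∃ m, n = m + 1 := ⟨n - 1, by omega⟩
  have hlen : (wpow B (m + 1)).length - B.length = (wpow B m).length := by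
    rw [wpow_length, wpow_length]; ring_nf; omega
  rw [hlen]
  conv_lhs => rw [wpow_succ']
  rw [List.take_left]
  conv_rhs => rw [show wpow B (m + 1) = B ++ wpow B m from by simp [wpow]]
  rw [List.drop_left]

theorem stmt5 {α : Type*} (A : List α) (hA : A ≠ []) (j : ℕ) (hj : j < A.length)
    (heq : A.take j = A.drop (A.length - j))
    (hmax : ∀ j', j < j' → j' < A.length → A.take j' ≠ A.drop (A.length - j'))
    (B : List α) (n : ℕ) (hB : Primitive B) (hn : 1 ≤ n) (hpow : A = wpow B n) :
    ((A.length - j) ∣ A.length → B.length = A.length - j) ∧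
    (¬ (A.length - j) ∣ A.length → B.length = A.length) := by
  have hN0 : 0 < A.length := List.length_pos_iff.mpr hA
  have hk1 : 1 ≤ A.length - j := by omega
  have hBne : B ≠ [] := hB.1
  have hB1 : 1 ≤ B.length := List.length_pos_iff.mpr hBne
  have hNB : A.length = n * B.length := by rw [hpow, wpow_length]
  have hBle : B.length ≤ A.length := by nlinarith
  -- period (A.length - j) of A from the border j
  have hperk : HasPer A (A.length - j) := by
    apply border_per A (A.length - j) (by omega)
    rw [show A.length - (A.length - j) = j by omega]
    exact heq
  -- A has a border of length A.length - B.length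
  have hbB : A.take (A.length - B.length) = A.drop B.length := by
    have h := pow_border B n hn
    rw [← hpow] at h
    exact h
  -- (A.length - j) ≤ B.length : the border of length A.length - B.length is ≤ j
  have hkB : A.length - j ≤ B.length := by
    by_contra hcon
    push_neg at hcon
    have hj' : j < A.length - B.length := by omega
    apply hmax (A.length - B.length) hj' (by omega)
    rw [show A.length - (A.length - B.length) = B.length by omega]
    exact hbB
  rcases eq_or_lt_of_le hn with hn1 | hn2
  · -- n = 1 : A = B
    have hAB : A = B := by rw [hpow, ← hn1]; simp [wpow]
    have hBN : B.length = A.length := by rw [← hAB]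
    constructor
    · intro hdvd
      obtain ⟨m, hm⟩ := hdvd
      have hm1 : m = 1 := by
        by_contra hm1
        have hm2 : 2 ≤ m := by
          rcases Nat.lt_or_ge m 2 with h | h
          · interval_cases m <;> omega
          · exact h
        have hApow := per_pow (A.length - j) hk1 m A (hm.trans (Nat.mul_comm _ _)) hperk
        exact hB.2 (A.take (A.length - j)) m hm2 (hAB ▸ hApow)
      rw [hm1, mul_one] at hm
      omega
    · intro _; exact hBN
  · -- n ≥ 2 : show A.length - j = B.length
    have hkeq : A.length - j = B.length := by
      have hperB : HasPer A B.length := border_per A B.length hBle hbB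
      have hg1 : 1 ≤ Nat.gcd (A.length - j) B.length :=
        Nat.gcd_pos_of_pos_left _ hk1
      have hsum : (A.length - j) + B.length ≤ A.length := by
        have h2 : 2 * B.length ≤ A.length := by rw [hNB]; nlinarith
        omega
      have hperg : ∀ i, i + Nat.gcd (A.length - j) B.length < A.length →
          A[i]? = A[i + Nat.gcd (A.length - j) B.length]? :=
        fine_wilf (fun i => A[i]?) A.length ((A.length - j) + B.length)
          (A.length - j) B.length rfl hsum (fun i hi => hperk i hi)
          (fun i hi => hperB i hi)
      -- B is a prefix of A
      have hBpref : A.take B.length = B := by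
        have hsplit : wpow B n = B ++ wpow B (n - 1) := by
          obtain ⟨m, rfl⟩ : ∃ m, n = m + 1 := ⟨n - 1, by omega⟩
          simp [wpow]
        rw [hpow, hsplit, List.take_left]
      -- B has period gcd
      have hperBg : HasPer B (Nat.gcd (A.length - j) B.length) := by
        intro i hi
        have e : ∀ t, t < B.length → B[t]? = A[t]? := by
          intro t ht
          rw [← hBpref, List.getElem?_take, if_pos ht]
        rw [e i (by omega), e (i + _) hi]
        exact hperg i (by omega)
      obtain ⟨r, hr⟩ := Nat.gcd_dvd_right (A.length - j) B.length
      have hBpow := per_pow _ hg1 r B (hr.trans (Nat.mul_comm _ _)) hperBg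
      have hr1 : r = 1 := by
        by_contra hr1
        have hr0 : r ≠ 0 := by
          rintro rfl
          rw [Nat.mul_zero] at hr
          omega
        have h2 : 2 ≤ r := by omega
        exact hB.2 _ r h2 hBpow
      rw [hr1, Nat.mul_one] at hr
      have hBg : B.length = Nat.gcd (A.length - j) B.length := hr
      have hdvd : B.length ∣ (A.length - j) :=
        hBg ▸ Nat.gcd_dvd_left (A.length - j) B.length
      have := Nat.le_of_dvd hk1 hdvd
      omega
    constructor
    · intro _; omega
    · intro hnd
      exfalso
      exact hnd (hkeq ▸ ⟨n, by rw [hNB]; ring⟩)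
end
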